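/- Sub-linearity of restricted sparse eigenvalues (Lemma 3.2): Let W be a positive semidefinite p×p real matrix, T ⊆ {1,…,p}, and for an integer m ≥ 0 define φ(m) := sup{δ'Wδ/‖δ‖₂² : δ ∈ ℝ^p, δ ≠ 0, ‖δ_{T^c}‖₀ ≤ m}. Then for any integer k ≥ 0 and any real ℓ ≥ 1, φ(⌈ℓk⌉) ≤ ⌈ℓ⌉·φ(k). -/

import Mathlib

open Finset MeasureTheory ProbabilityTheory

noncomputable section

/-- Prediction norm `‖δ‖_{2,n} = ((1/n) ∑_i (x_i'δ)²)^{1/2}`. -/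
def predNorm (n p : ℕ) (x : Fin n → Fin p → ℝ) (δ : Fin p → ℝ) : ℝ :=
  Real.sqrt ((n : ℝ)⁻¹ * ∑ i, (∑ j, x i j * δ j) ^ 2)

/-- Least-squares criterion `Q̂(β) = (1/n) ∑_i (y_i - x_i'β)²`. -/
def Qls (n p : ℕ) (x : Fin n → Fin p → ℝ) (y : Fin n → ℝ) (β : Fin p → ℝ) : ℝ :=
  (n : ℝ)⁻¹ * ∑ i, (y i - ∑ j, x i j * β j) ^ 2

/-- ℓ1-norm on `ℝ^p`. -/
def l1 {p : ℕ} (v : Fin p → ℝ) : ℝ := ∑ j, |v j|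

/-- sup-norm (max-absolute-coordinate norm) on `ℝ^p`. -/
def supNorm {p : ℕ} (v : Fin p → ℝ) : ℝ := ⨆ j, |v j|

/-- `restr A δ` is `δ` with coordinates outside `A` set to `0`. -/
def restr {p : ℕ} (A : Finset (Fin p)) (δ : Fin p → ℝ) : Fin p → ℝ :=
  fun j => if j ∈ A then δ j else 0

/-- Support of a vector, as a finset. -/
def suppF {p : ℕ} (v : Fin p → ℝ) : Finset (Fin p) :=
  Finset.univ.filter (fun j => v j ≠ 0)

/-- Restricted eigenvalue `κ(c̄)`. -/
def kappaRE (n p : ℕ) (x : Fin n → Fin p → ℝ) (T : Finset (Fin p)) (cbar : ℝ) : ℝ :=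
  sInf {r : ℝ | ∃ δ : Fin p → ℝ, δ ≠ 0 ∧ l1 (restr Tᶜ δ) ≤ cbar * l1 (restr T δ) ∧
    r = Real.sqrt T.card * predNorm n p x δ / l1 (restr T δ)}

/-- Restricted sparse maximal eigenvalue `φ(m)`. -/
def phiRSE (n p : ℕ) (x : Fin n → Fin p → ℝ) (T : Finset (Fin p)) (m : ℕ) : ℝ :=
  sSup {r : ℝ | ∃ δ : Fin p → ℝ, δ ≠ 0 ∧ (suppF (restr Tᶜ δ)).card ≤ m ∧
    r = (predNorm n p x δ) ^ 2 / ∑ j, δ j ^ 2}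

/-- Restricted sparse minimal eigenvalue `κ̃(m)²`. -/
def kappaTildeSq (n p : ℕ) (x : Fin n → Fin p → ℝ) (T : Finset (Fin p)) (m : ℕ) : ℝ :=
  sInf {r : ℝ | ∃ δ : Fin p → ℝ, δ ≠ 0 ∧ (suppF (restr Tᶜ δ)).card ≤ m ∧
    r = (predNorm n p x δ) ^ 2 / ∑ j, δ j ^ 2}

/-- The condition number `μ(m) = √φ(m)/κ̃(m)`. -/
def muCond (n p : ℕ) (x : Fin n → Fin p → ℝ) (T : Finset (Fin p)) (m : ℕ) : ℝ :=
  Real.sqrt (phiRSE n p x T m) / Real.sqrt (kappaTildeSq n p x T m)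


section Helpers
open Matrix

variable {p : ℕ} (W : Matrix (Fin p) (Fin p) ℝ)


variable {p : ℕ} (W : Matrix (Fin p) (Fin p) ℝ)

lemma mulVec_sum' (F : Finset ℕ) (v : ℕ → Fin p → ℝ) :
    W.mulVec (∑ i ∈ F, v i) = ∑ i ∈ F, W.mulVec (v i) := by
  induction F using Finset.cons_induction with
  | empty => simp [Matrix.mulVec_zero]
  | cons a F h ih => simp [Finset.sum_insert h, Matrix.mulVec_add, ih]

lemma dot_sum' (F : Finset ℕ) (v : ℕ → Fin p → ℝ) (y : Fin p → ℝ) :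
    dotProduct (∑ i ∈ F, v i) y = ∑ i ∈ F, dotProduct (v i) y := by
  induction F using Finset.cons_induction with
  | empty => simp
  | cons a F h ih => simp [Finset.sum_insert h, add_dotProduct, ih]

lemma dot_sum'' (F : Finset ℕ) (v : ℕ → Fin p → ℝ) (y : Fin p → ℝ) :
    dotProduct y (∑ i ∈ F, v i) = ∑ i ∈ F, dotProduct y (v i) := by
  induction F using Finset.cons_induction with
  | empty => simp
  | cons a F h ih => simp [Finset.sum_insert h, dotProduct_add, ih]

lemma quad_symm (hW : W.IsHermitian) (x y : Fin p → ℝ) :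
    dotProduct x (W.mulVec y) = dotProduct y (W.mulVec x) := by
  have hsym : ∀ i j, W i j = W j i := by
    intro i j
    conv_lhs => rw [← hW]
    simp [Matrix.conjTranspose_apply]
  simp only [dotProduct, Matrix.mulVec, dotProduct, Finset.mul_sum]
  rw [Finset.sum_comm]
  congr 1; ext j; congr 1; ext i; rw [hsym j i]; ring

lemma quad_nonneg (hW : W.PosSemidef) (x : Fin p → ℝ) :
    0 ≤ dotProduct x (W.mulVec x) := by
  have := hW.dotProduct_mulVec_nonneg x
  simpa using this

lemma two_bilin_le (hW : W.PosSemidef) (x y : Fin p → ℝ) :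
    2 * dotProduct x (W.mulVec y) ≤ dotProduct x (W.mulVec x) + dotProduct y (W.mulVec y) := by
  have h := quad_nonneg W hW (x - y)
  have hexp : dotProduct (x - y) (W.mulVec (x - y)) =
      dotProduct x (W.mulVec x) - 2 * dotProduct x (W.mulVec y) + dotProduct y (W.mulVec y) := by
    rw [Matrix.mulVec_sub, dotProduct_sub, sub_dotProduct, sub_dotProduct,
      quad_symm W hW.1 y x]
    ring
  linarith [hexp ▸ h]

lemma quad_sum_le (hW : W.PosSemidef) (F : Finset ℕ) (v : ℕ → Fin p → ℝ) :
    dotProduct (∑ i ∈ F, v i) (W.mulVec (∑ i ∈ F, v i)) ≤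
      (F.card : ℝ) * ∑ i ∈ F, dotProduct (v i) (W.mulVec (v i)) := by
  rw [mulVec_sum', dot_sum']
  calc ∑ i ∈ F, dotProduct (v i) (∑ j ∈ F, W.mulVec (v j))
      = ∑ i ∈ F, ∑ j ∈ F, dotProduct (v i) (W.mulVec (v j)) := by
        refine Finset.sum_congr rfl fun i _ => dot_sum'' F _ _
    _ ≤ ∑ i ∈ F, ∑ j ∈ F, (dotProduct (v i) (W.mulVec (v i)) + dotProduct (v j) (W.mulVec (v j))) / 2 := by
        refine Finset.sum_le_sum fun i _ => Finset.sum_le_sum fun j _ => ?_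
        have := two_bilin_le W hW (v i) (v j)
        linarith
    _ = (F.card : ℝ) * ∑ i ∈ F, dotProduct (v i) (W.mulVec (v i)) := by
        have key : ∀ i, ∑ j ∈ F, (dotProduct (v i) (W.mulVec (v i)) + dotProduct (v j) (W.mulVec (v j))) / 2
            = (F.card : ℝ) * dotProduct (v i) (W.mulVec (v i)) / 2
              + (∑ j ∈ F, dotProduct (v j) (W.mulVec (v j))) / 2 := by
          intro i
          rw [← Finset.sum_div, Finset.sum_add_distrib, Finset.sum_const, nsmul_eq_mul]
          ring
        simp_rw [key]
        rw [Finset.sum_add_distrib, Finset.sum_const, nsmul_eq_mul, ← Finset.sum_div,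
          ← Finset.mul_sum]
        ring

lemma sum_sq_pos {p : ℕ} {δ : Fin p → ℝ} (h : δ ≠ 0) : 0 < ∑ j, δ j ^ 2 := by
  obtain ⟨j, hj⟩ := Function.ne_iff.mp h
  have h1 : 0 < δ j ^ 2 := pow_two_pos_of_ne_zero hj
  exact lt_of_lt_of_le h1 (Finset.single_le_sum (fun i _ => sq_nonneg (δ i)) (Finset.mem_univ j))

lemma ratio_le_bound (hW : W.PosSemidef) (δ : Fin p → ℝ) (hδ : δ ≠ 0) :
    dotProduct δ (W.mulVec δ) / (∑ j, δ j ^ 2) ≤ ∑ i, ∑ j, |W i j| := by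
  have hS := sum_sq_pos hδ
  rw [div_le_iff₀ hS]
  have hQ : dotProduct δ (W.mulVec δ) = ∑ i, ∑ j, δ i * (W i j * δ j) := by
    simp [dotProduct, Matrix.mulVec, Finset.mul_sum]
  rw [hQ]
  calc (∑ i, ∑ j, δ i * (W i j * δ j)) ≤ ∑ i, ∑ j, |W i j| * (∑ l, δ l ^ 2) := by
        refine Finset.sum_le_sum fun i _ => Finset.sum_le_sum fun j _ => ?_
        have h1 : δ i * (W i j * δ j) ≤ |W i j| * (|δ i| * |δ j|) := by
          calc δ i * (W i j * δ j) ≤ |δ i * (W i j * δ j)| := le_abs_self _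
            _ = |W i j| * (|δ i| * |δ j|) := by rw [abs_mul, abs_mul]; ring
        have hi : δ i ^ 2 ≤ ∑ l, δ l ^ 2 :=
          Finset.single_le_sum (f := fun l => δ l ^ 2) (fun l _ => sq_nonneg _) (Finset.mem_univ i)
        have hj : δ j ^ 2 ≤ ∑ l, δ l ^ 2 :=
          Finset.single_le_sum (f := fun l => δ l ^ 2) (fun l _ => sq_nonneg _) (Finset.mem_univ j)
        have h2 : |δ i| * |δ j| ≤ ∑ l, δ l ^ 2 := by
          nlinarith [abs_nonneg (δ i), abs_nonneg (δ j), sq_abs (δ i), sq_abs (δ j)]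
        calc δ i * (W i j * δ j) ≤ |W i j| * (|δ i| * |δ j|) := h1
          _ ≤ |W i j| * ∑ l, δ l ^ 2 := mul_le_mul_of_nonneg_left h2 (abs_nonneg _)
    _ = (∑ i, ∑ j, |W i j|) * ∑ l, δ l ^ 2 := by
        rw [Finset.sum_mul]
        exact Finset.sum_congr rfl fun i _ => (Finset.sum_mul _ _ _).symm


lemma exists_coloring {p : ℕ} (k M : ℕ) (hk : 0 < k) (s : Finset (Fin p))
    (hcard : s.card ≤ M * k) :
    ∃ c : Fin p → ℕ, (∀ j ∈ s, c j < M) ∧ (∀ j ∉ s, c j = M) ∧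
      (∀ i, (s.filter (fun j => c j = i)).card ≤ k) := by
  classical
  set rank : Fin p → ℕ := fun j => (s.filter (· < j)).card with hrank
  have hrank_lt : ∀ j ∈ s, rank j < s.card := by
    intro j hj
    apply Finset.card_lt_card
    constructor
    · exact Finset.filter_subset _ _
    · intro hsub
      have := hsub hj
      simp at this
  have hrank_mono : ∀ j1 ∈ s, ∀ j2 ∈ s, j1 < j2 → rank j1 < rank j2 := by
    intro j1 h1 j2 h2 hlt
    apply Finset.card_lt_card
    constructor
    · intro x hx
      simp only [Finset.mem_filter] at hx ⊢
      exact ⟨hx.1, lt_trans hx.2 hlt⟩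
    · intro hsub
      have hm : j1 ∈ Finset.filter (· < j2) s := Finset.mem_filter.mpr ⟨h1, hlt⟩
      have := hsub hm
      simp at this
  have hrank_inj : ∀ j1 ∈ s, ∀ j2 ∈ s, rank j1 = rank j2 → j1 = j2 := by
    intro j1 h1 j2 h2 heq
    rcases lt_trichotomy j1 j2 with h | h | h
    · exact absurd heq (Nat.ne_of_lt (hrank_mono _ h1 _ h2 h))
    · exact h
    · exact absurd heq.symm (Nat.ne_of_lt (hrank_mono _ h2 _ h1 h))
  refine ⟨fun j => if j ∈ s then rank j / k else M, ?_, ?_, ?_⟩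
  · intro j hj
    simp only [if_pos hj]
    have : rank j < M * k := lt_of_lt_of_le (hrank_lt j hj) hcard
    have h2 : rank j < k * M := by
      rw [Nat.mul_comm]
      exact lt_of_lt_of_le (hrank_lt j hj) hcard
    exact Nat.div_lt_of_lt_mul h2
  · intro j hj; simp [if_neg hj]
  · intro i
    have hle : (s.filter (fun j => (if j ∈ s then rank j / k else M) = i)).card ≤
        (Finset.Ico (i*k) (i*k+k)).card := by
      apply Finset.card_le_card_of_injOn rank
      · intro j hj
        simp only [Finset.mem_coe, Finset.mem_filter] at hj
        obtain ⟨hjs, hji⟩ := hj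
        rw [if_pos hjs] at hji
        simp only [Finset.mem_coe, Finset.mem_Ico]
        constructor
        · calc i * k = rank j / k * k := by rw [hji]
            _ ≤ rank j := Nat.div_mul_le_self _ _
        · have hmod := Nat.div_add_mod (rank j) k
          rw [hji, Nat.mul_comm] at hmod
          have : rank j % k < k := Nat.mod_lt _ hk
          omega
      · intro j1 hj1 j2 hj2 heq
        exact hrank_inj j1 (Finset.mem_filter.mp (Finset.mem_coe.mp hj1)).1
          j2 (Finset.mem_filter.mp (Finset.mem_coe.mp hj2)).1 heq
    calc (s.filter (fun j => (if j ∈ s then rank j / k else M) = i)).card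
        ≤ (Finset.Ico (i*k) (i*k+k)).card := hle
      _ = k := by rw [Nat.card_Ico]; omega

end Helpers

/-- Lemma 3.2: sub-linearity of restricted sparse eigenvalues of a
positive semidefinite matrix. -/
theorem restricted_sparse_eigenvalue_sublinear
    (p : ℕ) (hp : 0 < p)
    (W : Matrix (Fin p) (Fin p) ℝ) (hW : W.PosSemidef)
    (T : Finset (Fin p))
    (φ : ℕ → ℝ)
    (hφ : ∀ m : ℕ, φ m = sSup {r : ℝ | ∃ δ : Fin p → ℝ, δ ≠ 0 ∧
      (suppF (restr Tᶜ δ)).card ≤ m ∧ r = dotProduct δ (W.mulVec δ) / ∑ j, δ j ^ 2})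
    (k : ℕ) (ℓ : ℝ) (hℓ : 1 ≤ ℓ) :
    φ ⌈ℓ * k⌉₊ ≤ (⌈ℓ⌉₊ : ℝ) * φ k := by
  classical
  have hM1 : (1:ℕ) ≤ ⌈ℓ⌉₊ := Nat.one_le_ceil_iff.mpr (by linarith)
  have hMR : (1:ℝ) ≤ (⌈ℓ⌉₊ : ℝ) := by exact_mod_cast hM1
  have hφk : 0 ≤ φ k := by
    rw [hφ k]
    apply Real.sSup_nonneg
    rintro r ⟨δ, hδ, -, rfl⟩
    exact div_nonneg (quad_nonneg W hW δ) (sum_sq_pos hδ).le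
  rcases Nat.eq_zero_or_pos k with hk0 | hk
  · subst hk0
    have hφ0 : 0 ≤ φ 0 := by simpa using hφk
    simp only [Nat.cast_zero, mul_zero, Nat.ceil_zero]
    nlinarith
  rw [hφ]
  apply Real.sSup_le
  · rintro r ⟨δ, hδ, hsupp, rfl⟩
    set M := ⌈ℓ⌉₊ with hM
    set s := suppF (restr Tᶜ δ) with hs
    have hcard : s.card ≤ M * k := by
      refine le_trans hsupp ?_
      rw [Nat.ceil_le]
      push_cast
      exact mul_le_mul_of_nonneg_right (Nat.le_ceil ℓ) (Nat.cast_nonneg k)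
    obtain ⟨c, hc1, hc2, hc3⟩ := exists_coloring k M hk s hcard
    set d : ℕ → Fin p → ℝ := fun i j => if c j = i then δ j else 0 with hd
    set v : ℕ → Fin p → ℝ := fun i => restr T δ + (M:ℝ) • d i with hv
    have hs_mem : ∀ j, j ∈ s ↔ (j ∉ T ∧ δ j ≠ 0) := by
      intro j
      by_cases hjT : j ∈ T <;>
        simp [hs, suppF, restr, Finset.mem_compl, hjT]
    have hdT : ∀ i < M, ∀ j ∈ T, d i j = 0 := by
      intro i hi j hjT
      have hjs : j ∉ s := fun hjs => ((hs_mem j).1 hjs).1 hjT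
      have hcj : c j = M := hc2 j hjs
      have : c j ≠ i := by omega
      simp [hd, this]
    have hsupp_vi : ∀ i < M, (suppF (restr Tᶜ (v i))).card ≤ k := by
      intro i hi
      refine le_trans (Finset.card_le_card ?_) (hc3 i)
      intro j hj
      simp only [suppF, Finset.mem_filter, Finset.mem_univ, true_and] at hj
      by_cases hjT : j ∈ T
      · exact absurd (by simp [restr, Finset.mem_compl, hjT]) hj
      · have hval : restr Tᶜ (v i) j = (M:ℝ) * d i j := by
          simp [restr, Finset.mem_compl, hjT, hv]
        rw [hval] at hj
        have hdij : d i j ≠ 0 := by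
          intro h0; apply hj; rw [h0]; ring
        have hcj : c j = i := by
          by_contra hne; exact hdij (by simp [hd, hne])
        have hδj : δ j ≠ 0 := by
          intro h0; exact hdij (by simp [hd, h0])
        exact Finset.mem_filter.mpr ⟨(hs_mem j).2 ⟨hjT, hδj⟩, hcj⟩
    have hbdd : BddAbove {r : ℝ | ∃ δ : Fin p → ℝ, δ ≠ 0 ∧
        (suppF (restr Tᶜ δ)).card ≤ k ∧
        r = dotProduct δ (W.mulVec δ) / ∑ j, δ j ^ 2} := by
      refine ⟨∑ i, ∑ j, |W i j|, ?_⟩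
      rintro r ⟨δ', hδ', -, rfl⟩
      exact ratio_le_bound W hW δ' hδ'
    have hQvi : ∀ i ∈ Finset.range M,
        dotProduct (v i) (W.mulVec (v i)) ≤ φ k * ∑ j, v i j ^ 2 := by
      intro i hi
      by_cases hv0 : v i = 0
      · rw [hv0]
        simp [Matrix.mulVec_zero]
      · have hpos := sum_sq_pos hv0
        have hmem : dotProduct (v i) (W.mulVec (v i)) / ∑ j, v i j ^ 2 ∈
            {r : ℝ | ∃ δ : Fin p → ℝ, δ ≠ 0 ∧ (suppF (restr Tᶜ δ)).card ≤ k ∧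
              r = dotProduct δ (W.mulVec δ) / ∑ j, δ j ^ 2} :=
          ⟨v i, hv0, hsupp_vi i (Finset.mem_range.mp hi), rfl⟩
        have hle := le_csSup hbdd hmem
        rw [← hφ k] at hle
        calc dotProduct (v i) (W.mulVec (v i))
            = (dotProduct (v i) (W.mulVec (v i)) / ∑ j, v i j ^ 2) * ∑ j, v i j ^ 2 := by
              field_simp
          _ ≤ φ k * ∑ j, v i j ^ 2 := mul_le_mul_of_nonneg_right hle hpos.le
    have hsplit : restr T δ + restr Tᶜ δ = δ := by
      funext j
      by_cases hjT : j ∈ T <;> simp [restr, Finset.mem_compl, hjT]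
    have hdsum : ∑ i ∈ Finset.range M, d i = restr Tᶜ δ := by
      funext j
      rw [Finset.sum_apply]
      have h0 : ∑ i ∈ Finset.range M, d i j = if c j ∈ Finset.range M then δ j else 0 :=
        Finset.sum_ite_eq _ _ _
      rw [h0]
      by_cases hjs : j ∈ s
      · have h1 := hc1 j hjs
        have h2 := (hs_mem j).1 hjs
        simp [Finset.mem_range.mpr h1, restr, Finset.mem_compl, h2.1]
      · have h1 := hc2 j hjs
        have h2 : restr Tᶜ δ j = 0 := by
          by_contra h0'
          exact hjs (by simp [hs, suppF, h0'])
        simp [h1, h2]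
    have hvsum : ∑ i ∈ Finset.range M, v i = (M:ℝ) • δ := by
      calc ∑ i ∈ Finset.range M, v i
          = (∑ _i ∈ Finset.range M, restr T δ) + ∑ i ∈ Finset.range M, (M:ℝ) • d i := by
            rw [← Finset.sum_add_distrib]
        _ = (M:ℝ) • restr T δ + (M:ℝ) • restr Tᶜ δ := by
            rw [Finset.sum_const, Finset.card_range, ← Finset.smul_sum, hdsum]
            congr 1
            funext j
            simp
        _ = (M:ℝ) • δ := by rw [← smul_add, hsplit]
    have hnorm_vi : ∀ i ∈ Finset.range M,
        ∑ j, v i j ^ 2 = (∑ j, restr T δ j ^ 2) + (M:ℝ) ^ 2 * ∑ j, d i j ^ 2 := by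
      intro i hi
      rw [Finset.mul_sum, ← Finset.sum_add_distrib]
      refine Finset.sum_congr rfl fun j _ => ?_
      have hcross : restr T δ j * d i j = 0 := by
        by_cases hjT : j ∈ T
        · rw [hdT i (Finset.mem_range.mp hi) j hjT]; ring
        · simp [restr, hjT]
      have hvij : v i j = restr T δ j + (M:ℝ) * d i j := by simp [hv]
      rw [hvij]
      linear_combination (2 * (M:ℝ)) * hcross
    have hdsq : ∑ i ∈ Finset.range M, ∑ j, d i j ^ 2 = ∑ j, restr Tᶜ δ j ^ 2 := by
      rw [Finset.sum_comm]
      refine Finset.sum_congr rfl fun j _ => ?_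
      have h1 : ∑ i ∈ Finset.range M, d i j ^ 2
          = if c j ∈ Finset.range M then δ j ^ 2 else 0 := by
        have h2 : ∀ i, d i j ^ 2 = if c j = i then δ j ^ 2 else 0 := fun i => by
          by_cases h : c j = i <;> simp [hd, h]
        simp_rw [h2]
        exact Finset.sum_ite_eq _ _ _
      rw [h1]
      by_cases hjs : j ∈ s
      · simp [Finset.mem_range.mpr (hc1 j hjs), restr, Finset.mem_compl, ((hs_mem j).1 hjs).1]
      · have h2 : restr Tᶜ δ j = 0 := by
          by_contra h0'
          exact hjs (by simp [hs, suppF, h0'])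
        simp [hc2 j hjs, h2]
    have hsq_split : (∑ j, restr T δ j ^ 2) + (∑ j, restr Tᶜ δ j ^ 2) = ∑ j, δ j ^ 2 := by
      rw [← Finset.sum_add_distrib]
      refine Finset.sum_congr rfl fun j _ => ?_
      by_cases hjT : j ∈ T <;> simp [restr, Finset.mem_compl, hjT]
    have hSpos : 0 < ∑ j, δ j ^ 2 := sum_sq_pos hδ
    have hMpos : (0:ℝ) < (M:ℝ) := by linarith
    have step1 : (M:ℝ) ^ 2 * dotProduct δ (W.mulVec δ) ≤
        (M:ℝ) * ∑ i ∈ Finset.range M, dotProduct (v i) (W.mulVec (v i)) := by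
      have h := quad_sum_le W hW (Finset.range M) v
      rw [hvsum] at h
      have hQs : dotProduct ((M:ℝ) • δ) (W.mulVec ((M:ℝ) • δ))
          = (M:ℝ) ^ 2 * dotProduct δ (W.mulVec δ) := by
        rw [Matrix.mulVec_smul, dotProduct_smul, smul_dotProduct]
        simp [smul_eq_mul]
        ring
      rw [hQs, Finset.card_range] at h
      exact h
    have step2 : ∑ i ∈ Finset.range M, dotProduct (v i) (W.mulVec (v i))
        ≤ φ k * ((M:ℝ) * (∑ j, restr T δ j ^ 2) + (M:ℝ) ^ 2 * (∑ j, restr Tᶜ δ j ^ 2)) := by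
      calc ∑ i ∈ Finset.range M, dotProduct (v i) (W.mulVec (v i))
          ≤ ∑ i ∈ Finset.range M, φ k * ∑ j, v i j ^ 2 := Finset.sum_le_sum hQvi
        _ = φ k * ∑ i ∈ Finset.range M, ∑ j, v i j ^ 2 := (Finset.mul_sum _ _ _).symm
        _ = φ k * ((M:ℝ) * (∑ j, restr T δ j ^ 2) + (M:ℝ) ^ 2 * (∑ j, restr Tᶜ δ j ^ 2)) := by
            congr 1
            rw [Finset.sum_congr rfl hnorm_vi, Finset.sum_add_distrib, Finset.sum_const,
              Finset.card_range, ← Finset.mul_sum, hdsq]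
            simp [nsmul_eq_mul]
    have step3 : (M:ℝ) * (∑ j, restr T δ j ^ 2) + (M:ℝ) ^ 2 * (∑ j, restr Tᶜ δ j ^ 2)
        ≤ (M:ℝ) ^ 2 * ∑ j, δ j ^ 2 := by
      have hA : 0 ≤ ∑ j, restr T δ j ^ 2 := Finset.sum_nonneg fun j _ => sq_nonneg _
      have h0 : 0 ≤ (M:ℝ) * ((M:ℝ) - 1) * ∑ j, restr T δ j ^ 2 :=
        mul_nonneg (mul_nonneg hMpos.le (by linarith)) hA
      have h4 : (M:ℝ) ^ 2 * ((∑ j, restr T δ j ^ 2) + (∑ j, restr Tᶜ δ j ^ 2))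
          = (M:ℝ) ^ 2 * ∑ j, δ j ^ 2 := by rw [hsq_split]
      nlinarith [h0, h4]
    have hchain : (M:ℝ) ^ 2 * dotProduct δ (W.mulVec δ)
        ≤ (M:ℝ) ^ 2 * ((M:ℝ) * φ k * ∑ j, δ j ^ 2) := by
      calc (M:ℝ) ^ 2 * dotProduct δ (W.mulVec δ)
          ≤ (M:ℝ) * ∑ i ∈ Finset.range M, dotProduct (v i) (W.mulVec (v i)) := step1
        _ ≤ (M:ℝ) * (φ k * ((M:ℝ) * (∑ j, restr T δ j ^ 2)
              + (M:ℝ) ^ 2 * (∑ j, restr Tᶜ δ j ^ 2))) :=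
            mul_le_mul_of_nonneg_left step2 hMpos.le
        _ ≤ (M:ℝ) * (φ k * ((M:ℝ) ^ 2 * ∑ j, δ j ^ 2)) :=
            mul_le_mul_of_nonneg_left (mul_le_mul_of_nonneg_left step3 hφk) hMpos.le
        _ = (M:ℝ) ^ 2 * ((M:ℝ) * φ k * ∑ j, δ j ^ 2) := by ring
    have hQle : dotProduct δ (W.mulVec δ) ≤ (M:ℝ) * φ k * ∑ j, δ j ^ 2 :=
      le_of_mul_le_mul_left hchain (by positivity)
    rw [div_le_iff₀ hSpos]
    calc dotProduct δ (W.mulVec δ) ≤ (M:ℝ) * φ k * ∑ j, δ j ^ 2 := hQle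
      _ = (M:ℝ) * φ k * ∑ j, δ j ^ 2 := rfl
  · exact mul_nonneg (by positivity) hφk
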